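/- Fix n ≥ 2, k ≥ 1, and p ≥ 1. The number of pairs (x, y) ∈ G_p × G_p such that the reduced word of x has length at least k+1 with (k+1)-st letter a_1 and k-th letter not equal to a_2^{−1} (nor to a_1^{−1}, which is automatic by reducedness), and the reduced word of y has length at least k+1 with first k letters equal to the first k letters of the reduced word of x and (k+1)-st letter equal to a_2, is exactly ((n−1)/(n(2n−1)))·𝒮(k+1,p)²/𝒲(k+1). -/

import Mathlib

/-- `Gcard n p` is the number of elements of the rank-`n` free group whose reduced word
has length at most `p` (the cardinality of `G_p`). -/
noncomputable def Gcard (n p : ℕ) : ℕ :=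
  {w : FreeGroup (Fin n) | w.toWord.length ≤ p}.ncard

/-- `Scard n k p = |G_p| − |G_{k−1}|` is the number of elements of the rank-`n` free
group whose reduced word has length between `k` and `p`. -/
noncomputable def Scard (n k p : ℕ) : ℕ := Gcard n p - Gcard n (k - 1)

/-- `Wcard n k = 2n(2n−1)^{k−1}` is the number of elements of the rank-`n` free group
whose reduced word has length exactly `k` (for `k ≥ 1`). -/
def Wcard (n k : ℕ) : ℕ := 2 * n * (2 * n - 1) ^ (k - 1)

set_option linter.deprecated false in
@[simp] theorem List.chain'_nil {α : Type*} {R : α → α → Prop} : List.Chain' R [] := List.IsChain.nil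

set_option linter.deprecated false in
@[simp] theorem List.chain'_singleton {α : Type*} {R : α → α → Prop} (a : α) :
    List.Chain' R [a] := List.IsChain.singleton a

set_option linter.deprecated false in
theorem List.chain'_reverse {α : Type*} {R : α → α → Prop} {l : List α} :
    List.Chain' R l.reverse ↔ List.Chain' (flip R) l := List.isChain_reverse

set_option linter.deprecated false in
theorem List.Chain'.imp {α : Type*} {R S : α → α → Prop} (H : ∀ a b, R a b → S a b)
    {l : List α} (h : List.Chain' R l) : List.Chain' S l := List.IsChain.imp H h

set_option linter.deprecated false in
theorem List.chain'_cons' {α : Type*} {R : α → α → Prop} {x : α} {l : List α} :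
    List.Chain' R (x :: l) ↔ (∀ y ∈ l.head?, R x y) ∧ List.Chain' R l := List.isChain_cons

set_option linter.deprecated false in
theorem List.chain'_cons {α : Type*} {R : α → α → Prop} {x y : α} {l : List α} :
    List.Chain' R (x :: y :: l) ↔ R x y ∧ List.Chain' R (y :: l) := List.isChain_cons_cons

set_option linter.deprecated false in
theorem List.chain'_append {α : Type*} {R : α → α → Prop} {l₁ l₂ : List α} :
    List.Chain' R (l₁ ++ l₂) ↔ List.Chain' R l₁ ∧ List.Chain' R l₂ ∧
      ∀ x ∈ l₁.getLast?, ∀ y ∈ l₂.head?, R x y := List.isChain_append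

namespace CC3

/-- The no-cancellation relation on letters. -/
def RL {α : Type*} (a b : α × Bool) : Prop := ¬(a.1 = b.1 ∧ a.2 = !b.2)

lemma RL_iff {α : Type*} (a b : α × Bool) : RL a b ↔ b ≠ (a.1, !a.2) := by
  rcases a with ⟨a1, a2⟩; rcases b with ⟨b1, b2⟩
  simp only [RL, Prod.mk.injEq, ne_eq, not_iff_not]
  cases a2 <;> cases b2 <;> simp [eq_comm]

lemma RL_symm {α : Type*} {a b : α × Bool} (h : RL a b) : RL b a := by
  rcases a with ⟨a1, a2⟩; rcases b with ⟨b1, b2⟩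
  simp only [RL] at h ⊢
  cases a2 <;> cases b2 <;> simp_all [eq_comm]

lemma RL_iff_left {α : Type*} (a b : α × Bool) : RL a b ↔ a ≠ (b.1, !b.2) :=
  ⟨fun h => (RL_iff _ _).mp (RL_symm h), fun h => RL_symm ((RL_iff _ _).mpr h)⟩

lemma chain'_reverse_iff {α : Type*} {l : List (α × Bool)} :
    l.reverse.Chain' RL ↔ l.Chain' RL := by
  rw [List.chain'_reverse]
  constructor
  · exact fun h => h.imp (fun a b hab => RL_symm hab)
  · exact fun h => h.imp (fun a b hab => RL_symm hab)

lemma reduce_of_red {α : Type*} [DecidableEq α] :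
    ∀ l : List (α × Bool), l.Chain' RL → FreeGroup.reduce l = l := by
  intro l
  induction l with
  | nil => simp
  | cons a t ih =>
    intro h
    rw [List.chain'_cons'] at h
    have ht := ih h.2
    rw [FreeGroup.reduce.cons, ht]
    cases t with
    | nil => rfl
    | cons b t' =>
      have hab : RL a b := h.1 b rfl
      exact if_neg hab

lemma red_of_reduce {α : Type*} [DecidableEq α] :
    ∀ l : List (α × Bool), FreeGroup.reduce l = l → l.Chain' RL := by
  intro l
  induction l with
  | nil => intro _; simp
  | cons a t ih =>
    intro h
    rw [FreeGroup.reduce.cons] at h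
    have hlen : (FreeGroup.reduce t).length ≤ t.length :=
      FreeGroup.Red.length_le (FreeGroup.reduce.red)
    rcases hrt : FreeGroup.reduce t with _ | ⟨b, t'⟩
    · rw [hrt] at h
      have h' : [a] = a :: t := h
      have : t = [] := by simpa using h'.symm
      subst this; simp
    · rw [hrt] at h
      by_cases hc : a.1 = b.1 ∧ a.2 = !b.2
      · have h' : t' = a :: t := by rw [← h]; exact (if_pos hc).symm
        rw [hrt] at hlen
        have : t'.length = t.length + 1 := by rw [h']; simp
        simp only [List.length_cons] at hlen
        omega
      · have h' : a :: b :: t' = a :: t := by rw [← h]; exact (if_neg hc).symm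
        have ht : t = b :: t' := by injection h' with _ h2; exact h2.symm
        have hred : FreeGroup.reduce t = t := by rw [hrt, ht]
        have := ih hred
        rw [ht, List.chain'_cons]
        rw [ht] at this
        exact ⟨hc, this⟩

variable {n : ℕ}

/-- reduced tails of length `j` extending the letter `a`. -/
def ext (n : ℕ) : (Fin n × Bool) → ℕ → Finset (List (Fin n × Bool))
  | _, 0 => {[]}
  | a, j+1 => (Finset.univ.filter (fun b => b ≠ (a.1, !a.2))).biUnion
      (fun b => (ext n b j).image (b :: ·))

lemma mem_ext {a : Fin n × Bool} {j : ℕ} {t : List (Fin n × Bool)} :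
    t ∈ ext n a j ↔ t.length = j ∧ (a :: t).Chain' RL := by
  induction j generalizing a t with
  | zero =>
    simp only [ext, Finset.mem_singleton, List.length_eq_zero_iff]
    constructor
    · rintro rfl; simp
    · rintro ⟨rfl, _⟩; rfl
  | succ j ih =>
    simp only [ext, Finset.mem_biUnion, Finset.mem_filter, Finset.mem_image, Finset.mem_univ,
      true_and]
    constructor
    · rintro ⟨b, hb, t', ht', rfl⟩
      rw [ih] at ht'
      refine ⟨by simp [ht'.1], ?_⟩
      rw [List.chain'_cons]
      exact ⟨(RL_iff a b).mpr hb, ht'.2⟩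
    · rintro ⟨hlen, hchain⟩
      cases t with
      | nil => simp at hlen
      | cons b t' =>
        rw [List.chain'_cons] at hchain
        exact ⟨b, (RL_iff a b).mp hchain.1, t', ih.mpr ⟨by simpa using hlen, hchain.2⟩, rfl⟩

lemma card_letters (hn : 1 ≤ n) : Fintype.card (Fin n × Bool) = 2 * n := by
  simp [Fintype.card_prod, mul_comm]

lemma card_ext (hn : 1 ≤ n) (a : Fin n × Bool) (j : ℕ) :
    (ext n a j).card = (2 * n - 1) ^ j := by
  induction j generalizing a with
  | zero => simp [ext]
  | succ j ih =>
    rw [ext, Finset.card_biUnion]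
    · rw [Finset.sum_congr rfl (fun b _ => by
        rw [Finset.card_image_of_injective _ (List.cons_injective), ih b])]
      rw [Finset.sum_const, smul_eq_mul, Finset.filter_ne', Finset.card_erase_of_mem
        (Finset.mem_univ _), Finset.card_univ, card_letters hn, pow_succ]
      ring
    · intro b _ c _ hbc
      simp only [Finset.disjoint_left, Finset.mem_image]
      rintro x ⟨t, _, rfl⟩ ⟨t', _, h⟩
      exact hbc (by injection h with h1 _; exact h1.symm)

/-- all reduced words of length `ℓ`. -/
def wordsF (n : ℕ) : ℕ → Finset (List (Fin n × Bool))
  | 0 => {[]}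
  | ℓ+1 => Finset.univ.biUnion (fun b => (ext n b ℓ).image (b :: ·))

lemma mem_wordsF {ℓ : ℕ} {l : List (Fin n × Bool)} :
    l ∈ wordsF n ℓ ↔ l.length = ℓ ∧ l.Chain' RL := by
  cases ℓ with
  | zero =>
    simp only [wordsF, Finset.mem_singleton, List.length_eq_zero_iff]
    constructor
    · rintro rfl; simp
    · rintro ⟨rfl, _⟩; rfl
  | succ ℓ =>
    simp only [wordsF, Finset.mem_biUnion, Finset.mem_univ, true_and, Finset.mem_image]
    constructor
    · rintro ⟨b, t, ht, rfl⟩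
      rw [mem_ext] at ht
      exact ⟨by simp [ht.1], ht.2⟩
    · rintro ⟨hlen, hchain⟩
      cases l with
      | nil => simp at hlen
      | cons b t => exact ⟨b, t, mem_ext.mpr ⟨by simpa using hlen, hchain⟩, rfl⟩

lemma card_wordsF (hn : 1 ≤ n) (ℓ : ℕ) :
    (wordsF n (ℓ + 1)).card = 2 * n * (2 * n - 1) ^ ℓ := by
  rw [wordsF, Finset.card_biUnion]
  · rw [Finset.sum_congr rfl (fun b _ => by
      rw [Finset.card_image_of_injective _ (List.cons_injective), card_ext hn b ℓ])]
    rw [Finset.sum_const, smul_eq_mul, Finset.card_univ, card_letters hn]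
  · intro b _ c _ hbc
    simp only [Finset.disjoint_left, Finset.mem_image]
    rintro x ⟨t, _, rfl⟩ ⟨t', _, h⟩
    exact hbc (by injection h with h1 _; exact h1.symm)

lemma ncard_toWord {α : Type*} [DecidableEq α] (Q : List (α × Bool) → Prop) :
    {w : FreeGroup α | Q w.toWord}.ncard = {l : List (α × Bool) | l.Chain' RL ∧ Q l}.ncard := by
  rw [← Set.ncard_image_of_injective _ FreeGroup.toWord_injective]
  congr 1
  ext l
  simp only [Set.mem_image, Set.mem_setOf_eq]
  constructor
  · rintro ⟨w, hw, rfl⟩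
    exact ⟨red_of_reduce _ (FreeGroup.reduce_toWord w), hw⟩
  · rintro ⟨hred, hQ⟩
    have h : (FreeGroup.mk l).toWord = l := by
      rw [FreeGroup.toWord_mk, reduce_of_red _ hred]
    exact ⟨FreeGroup.mk l, by rw [h]; exact hQ, h⟩

lemma ncard_toWord2 {α : Type*} [DecidableEq α]
    (Q : List (α × Bool) → List (α × Bool) → Prop) :
    {xy : FreeGroup α × FreeGroup α | Q xy.1.toWord xy.2.toWord}.ncard =
      {ll : List (α × Bool) × List (α × Bool) |
        ll.1.Chain' RL ∧ ll.2.Chain' RL ∧ Q ll.1 ll.2}.ncard := by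
  have hinj : Function.Injective
      (Prod.map (FreeGroup.toWord (α := α)) (FreeGroup.toWord (α := α))) :=
    FreeGroup.toWord_injective.prodMap FreeGroup.toWord_injective
  rw [← Set.ncard_image_of_injective _ hinj]
  congr 1
  ext ⟨lx, ly⟩
  simp only [Set.mem_image, Set.mem_setOf_eq, Prod.exists, Prod.map, Prod.mk.injEq]
  constructor
  · rintro ⟨x, y, hQ, rfl, rfl⟩
    exact ⟨red_of_reduce _ (FreeGroup.reduce_toWord x),
      red_of_reduce _ (FreeGroup.reduce_toWord y), hQ⟩
  · rintro ⟨hx, hy, hQ⟩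
    have h1 : (FreeGroup.mk lx).toWord = lx := by
      rw [FreeGroup.toWord_mk, reduce_of_red _ hx]
    have h2 : (FreeGroup.mk ly).toWord = ly := by
      rw [FreeGroup.toWord_mk, reduce_of_red _ hy]
    exact ⟨FreeGroup.mk lx, FreeGroup.mk ly, by rw [h1, h2]; exact hQ, h1, h2⟩

lemma Gcard_eq (p : ℕ) :
    Gcard n p = ∑ ℓ ∈ Finset.range (p + 1), (wordsF n ℓ).card := by
  rw [Gcard, ncard_toWord (fun l => l.length ≤ p)]
  have hset : {l : List (Fin n × Bool) | l.Chain' RL ∧ l.length ≤ p} =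
      ↑((Finset.range (p + 1)).biUnion (wordsF n)) := by
    ext l
    simp only [Set.mem_setOf_eq, Finset.coe_biUnion, Finset.coe_range, Set.mem_iUnion,
      Set.mem_Iio, Finset.mem_coe, mem_wordsF]
    constructor
    · rintro ⟨hc, hl⟩; exact ⟨l.length, by omega, rfl, hc⟩
    · rintro ⟨ℓ, hℓ, rfl, hc⟩; exact ⟨hc, by omega⟩
  rw [hset, Set.ncard_coe_finset, Finset.card_biUnion]
  intro a _ b _ hab
  simp only [Finset.disjoint_left, mem_wordsF]
  rintro x ⟨rfl, _⟩ ⟨h, _⟩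
  exact hab h

lemma Scard_eq (hn : 1 ≤ n) (k p : ℕ) :
    Scard n (k + 1) p = 2 * n * (2 * n - 1) ^ k * ∑ j ∈ Finset.range (p - k), (2 * n - 1) ^ j := by
  have hk1 : k + 1 - 1 = k := rfl
  rw [Scard, hk1, Gcard_eq, Gcard_eq]
  by_cases hpk : p ≤ k
  · have h0 : p - k = 0 := by omega
    rw [h0]
    simp only [Finset.range_zero, Finset.sum_empty, mul_zero]
    refine Nat.sub_eq_zero_of_le (Finset.sum_le_sum_of_subset ?_)
    intro x hx
    simp only [Finset.mem_range] at hx ⊢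
    omega
  · push_neg at hpk
    have hsplit : ∑ ℓ ∈ Finset.range (k + 1), (wordsF n ℓ).card +
        ∑ ℓ ∈ Finset.Ico (k + 1) (p + 1), (wordsF n ℓ).card =
        ∑ ℓ ∈ Finset.range (p + 1), (wordsF n ℓ).card := by
      rw [Finset.range_eq_Ico, Finset.range_eq_Ico]
      exact Finset.sum_Ico_consecutive (fun ℓ => (wordsF n ℓ).card) (Nat.zero_le _) (by omega : k + 1 ≤ p + 1)
    rw [← hsplit, Nat.add_sub_cancel_left, Finset.sum_Ico_eq_sum_range]
    have hlen : p + 1 - (k + 1) = p - k := by omega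
    rw [hlen, Finset.mul_sum]
    refine Finset.sum_congr rfl fun j _ => ?_
    have : k + 1 + j = (k + j) + 1 := by omega
    rw [this, card_wordsF hn, pow_add]; ring

/-- reduced words starting with a letter of `B` followed by a tail of length `m`. -/
def consSet (n : ℕ) (B : Finset (Fin n × Bool)) (m : ℕ) : Finset (List (Fin n × Bool)) :=
  B.biUnion (fun b => (ext n b m).image (b :: ·))

lemma mem_consSet {B : Finset (Fin n × Bool)} {m : ℕ} {l : List (Fin n × Bool)} :
    l ∈ consSet n B m ↔ ∃ b ∈ B, ∃ t, t.length = m ∧ (b :: t).Chain' RL ∧ l = b :: t := by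
  simp only [consSet, Finset.mem_biUnion, Finset.mem_image, mem_ext]
  constructor
  · rintro ⟨b, hb, t, ⟨ht1, ht2⟩, rfl⟩
    exact ⟨b, hb, t, ht1, ht2, rfl⟩
  · rintro ⟨b, hb, t, ht1, ht2, rfl⟩
    exact ⟨b, hb, t, ⟨ht1, ht2⟩, rfl⟩

lemma card_consSet (hn : 1 ≤ n) (B : Finset (Fin n × Bool)) (m : ℕ) :
    (consSet n B m).card = B.card * (2 * n - 1) ^ m := by
  rw [consSet, Finset.card_biUnion]
  · rw [Finset.sum_congr rfl (fun b _ => by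
      rw [Finset.card_image_of_injective _ (List.cons_injective), card_ext hn b m])]
    rw [Finset.sum_const, smul_eq_mul]
  · intro b _ c _ hbc
    simp only [Finset.disjoint_left, Finset.mem_image]
    rintro x ⟨t, _, rfl⟩ ⟨t', _, h⟩
    exact hbc (by injection h with h1 _; exact h1.symm)

lemma mem_USet {B : Finset (Fin n × Bool)} {k : ℕ} (hk : 1 ≤ k) {u : List (Fin n × Bool)} :
    u ∈ (consSet n B (k - 1)).image List.reverse ↔
      u.length = k ∧ u.Chain' RL ∧ ∃ z, u.getLast? = some z ∧ z ∈ B := by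
  simp only [Finset.mem_image]
  constructor
  · rintro ⟨v, hv, rfl⟩
    rw [mem_consSet] at hv
    obtain ⟨b, hb, t, ht1, ht2, rfl⟩ := hv
    refine ⟨by simp only [List.length_reverse, List.length_cons, ht1]; omega,
      chain'_reverse_iff.mpr ht2, b, ?_, hb⟩
    rw [List.getLast?_reverse]; rfl
  · rintro ⟨hlen, hchain, z, hz, hzB⟩
    refine ⟨u.reverse, ?_, by simp⟩
    rw [mem_consSet]
    cases hrev : u.reverse with
    | nil =>
      exfalso
      have : u.reverse.length = 0 := by rw [hrev]; rfl
      simp only [List.length_reverse] at this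
      omega
    | cons b t =>
      have h1 : u.reverse.head? = some b := by rw [hrev]; rfl
      rw [List.head?_reverse, hz] at h1
      injection h1 with h1
      have hlent : t.length = k - 1 := by
        have : u.reverse.length = k := by simp [hlen]
        rw [hrev] at this
        simp only [List.length_cons] at this
        omega
      have hchainr : (b :: t).Chain' RL := by
        rw [← hrev]; exact chain'_reverse_iff.mpr hchain
      exact ⟨b, h1 ▸ hzB, t, hlent, hchainr, rfl⟩

lemma card_USet (hn : 1 ≤ n) (B : Finset (Fin n × Bool)) (k : ℕ) :
    ((consSet n B (k - 1)).image List.reverse).card = B.card * (2 * n - 1) ^ (k - 1) := by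
  rw [Finset.card_image_of_injective _ List.reverse_injective, card_consSet hn]

/-- reduced tails of length `< m` extending `a`. -/
def XSet (n : ℕ) (a : Fin n × Bool) (m : ℕ) : Finset (List (Fin n × Bool)) :=
  (Finset.range m).biUnion (ext n a)

lemma mem_XSet {a : Fin n × Bool} {m : ℕ} {t : List (Fin n × Bool)} :
    t ∈ XSet n a m ↔ t.length < m ∧ (a :: t).Chain' RL := by
  simp only [XSet, Finset.mem_biUnion, Finset.mem_range, mem_ext]
  constructor
  · rintro ⟨j, hj, rfl, hc⟩; exact ⟨hj, hc⟩
  · rintro ⟨hl, hc⟩; exact ⟨t.length, hl, rfl, hc⟩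

lemma card_XSet (hn : 1 ≤ n) (a : Fin n × Bool) (m : ℕ) :
    (XSet n a m).card = ∑ j ∈ Finset.range m, (2 * n - 1) ^ j := by
  rw [XSet, Finset.card_biUnion]
  · exact Finset.sum_congr rfl fun j _ => card_ext hn a j
  · intro i _ j _ hij
    simp only [Finset.disjoint_left, mem_ext]
    rintro x ⟨rfl, _⟩ ⟨h, _⟩
    exact hij h

lemma card_FSet {a1 a2 : Fin n × Bool} {U X Y : Finset (List (Fin n × Bool))} {k : ℕ}
    (hU : ∀ u ∈ U, u.length = k) :
    ((U ×ˢ X ×ˢ Y).image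
        (fun z => (z.1 ++ a1 :: z.2.1, z.1 ++ a2 :: z.2.2))).card =
      U.card * (X.card * Y.card) := by
  rw [Finset.card_image_of_injOn, Finset.card_product, Finset.card_product]
  rintro ⟨u, tx, ty⟩ hz ⟨u', tx', ty'⟩ hz' heq
  simp only [Finset.mem_coe, Finset.mem_product] at hz hz'
  rw [Prod.mk.injEq] at heq
  obtain ⟨h1, h2⟩ := heq
  obtain ⟨hu, hcons⟩ := List.append_inj h1 (by rw [hU _ hz.1, hU _ hz'.1])
  obtain ⟨-, hcons2⟩ := List.append_inj h2 (by rw [hU _ hz.1, hU _ hz'.1])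
  injection hcons with _ htx
  injection hcons2 with _ hty
  subst hu htx hty
  rfl

/-- The central counting lemma, at the level of pairs of reduced words. -/
lemma ncard_P {k p : ℕ} (hn : 1 ≤ n) (hk : 1 ≤ k) (i j : Fin n) (hij : i ≠ j) :
    {ll : List (Fin n × Bool) × List (Fin n × Bool) |
      ll.1.Chain' RL ∧ ll.2.Chain' RL ∧
      (ll.1.length ≤ p ∧ ll.2.length ≤ p ∧ k + 1 ≤ ll.1.length ∧
       ll.1[k]? = some (i, true) ∧ ll.1[k - 1]? ≠ some (j, false) ∧
       k + 1 ≤ ll.2.length ∧ ll.2.take k = ll.1.take k ∧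
       ll.2[k]? = some (j, true))}.ncard =
      (2 * n - 2) * (2 * n - 1) ^ (k - 1) *
        ((∑ l ∈ Finset.range (p - k), (2 * n - 1) ^ l) *
          (∑ l ∈ Finset.range (p - k), (2 * n - 1) ^ l)) := by
  classical
  set a1 : Fin n × Bool := (i, true) with ha1
  set a2 : Fin n × Bool := (j, true) with ha2
  set c1 : Fin n × Bool := (i, false) with hc1
  set c2 : Fin n × Bool := (j, false) with hc2
  set B : Finset (Fin n × Bool) := Finset.univ.filter (fun b => b ≠ c1 ∧ b ≠ c2) with hB
  set U := (consSet n B (k - 1)).image List.reverse with hU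
  set X := XSet n a1 (p - k) with hX
  set Y := XSet n a2 (p - k) with hY
  have hUlen : ∀ u ∈ U, u.length = k := fun u hu => ((mem_USet hk).mp hu).1
  have hsetF : {ll : List (Fin n × Bool) × List (Fin n × Bool) |
      ll.1.Chain' RL ∧ ll.2.Chain' RL ∧
      (ll.1.length ≤ p ∧ ll.2.length ≤ p ∧ k + 1 ≤ ll.1.length ∧
       ll.1[k]? = some (i, true) ∧ ll.1[k - 1]? ≠ some (j, false) ∧
       k + 1 ≤ ll.2.length ∧ ll.2.take k = ll.1.take k ∧
       ll.2[k]? = some (j, true))} =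
      ↑((U ×ˢ X ×ˢ Y).image
        (fun z : List (Fin n × Bool) × List (Fin n × Bool) × List (Fin n × Bool) =>
          (z.1 ++ a1 :: z.2.1, z.1 ++ a2 :: z.2.2))) := by
    ext ⟨lx, ly⟩
    simp only [Set.mem_setOf_eq, Finset.coe_image, Set.mem_image, Finset.mem_coe,
      Finset.mem_product]
    constructor
    · rintro ⟨hcx, hcy, h1, h2, h3, h4, h5, h6, h7, h8⟩
      have hklx : k < lx.length := by omega
      have hkly : k < ly.length := by omega
      have hxk : lx[k] = a1 := by
        have := List.getElem?_eq_getElem hklx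
        rw [h4] at this
        exact (Option.some.injEq _ _ ▸ this).symm
      have hyk : ly[k] = a2 := by
        have := List.getElem?_eq_getElem hkly
        rw [h8] at this
        exact (Option.some.injEq _ _ ▸ this).symm
      obtain ⟨u, tx, hlx, hulen⟩ :
          ∃ u tx, lx = u ++ a1 :: tx ∧ u.length = k := by
        refine ⟨lx.take k, lx.drop (k + 1), ?_, by simp [List.length_take]; omega⟩
        conv_lhs => rw [← List.take_append_drop k lx]
        rw [List.drop_eq_getElem_cons hklx, hxk]
      obtain ⟨v, ty, hly, hvlen⟩ :
          ∃ v ty, ly = v ++ a2 :: ty ∧ v.length = k := by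
        refine ⟨ly.take k, ly.drop (k + 1), ?_, by simp [List.length_take]; omega⟩
        conv_lhs => rw [← List.take_append_drop k ly]
        rw [List.drop_eq_getElem_cons hkly, hyk]
      subst hlx hly
      -- identify v with u
      rw [List.take_left' hvlen, List.take_left' hulen] at h7
      rw [h7] at hcy h2 h6 h8 ⊢
      rw [List.chain'_append] at hcx hcy
      obtain ⟨hcu, hca1, hbx⟩ := hcx
      obtain ⟨-, hca2, hby⟩ := hcy
      -- the last letter of u
      have hune : u ≠ [] := by intro h; rw [h] at hulen; simp at hulen; omega
      set z := u.getLast hune with hzdef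
      have hzlast : u.getLast? = some z := List.getLast?_eq_getLast hune
      have hz1 : RL z a1 := hbx z hzlast a1 rfl
      have hz2 : RL z a2 := hby z hzlast a2 rfl
      have hlxlen : (u ++ a1 :: tx).length = k + 1 + tx.length := by simp [hulen]; omega
      have hlylen : (u ++ a2 :: ty).length = k + 1 + ty.length := by simp [hulen]; omega
      have hzc2 : z ≠ c2 := by
        intro hzc
        apply h5
        rw [List.getElem?_append, if_pos (by omega)]
        have : u[k-1]? = u.getLast? := by
          rw [List.getLast?_eq_getElem?, hulen]
        rw [this, hzlast, hzc]
      have hzc1 : z ≠ c1 := by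
        rw [RL_iff_left] at hz1
        simpa [ha1, hc1] using hz1
      refine ⟨⟨u, tx, ty⟩, ⟨?_, ?_, ?_⟩, rfl⟩ <;> dsimp only
      · rw [hU, mem_USet hk]
        exact ⟨hulen, hcu, z, hzlast, by simp [hB, hzc1, hzc2]⟩
      · rw [hX, mem_XSet]
        exact ⟨by omega, hca1⟩
      · rw [hY, mem_XSet]
        exact ⟨by omega, hca2⟩
    · rintro ⟨⟨u, tx, ty⟩, ⟨hu, htx, hty⟩, heq⟩
      dsimp only at hu htx hty heq
      rw [Prod.mk.injEq] at heq
      obtain ⟨hlx, hly⟩ := heq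
      subst hlx hly
      rw [hU, mem_USet hk] at hu
      obtain ⟨hulen, hcu, z, hzlast, hzB⟩ := hu
      rw [hB, Finset.mem_filter] at hzB
      obtain ⟨-, hzc1, hzc2⟩ := hzB
      rw [hX, mem_XSet] at htx
      rw [hY, mem_XSet] at hty
      obtain ⟨htxlen, hctx⟩ := htx
      obtain ⟨htylen, hcty⟩ := hty
      have hpk : k < p := by omega
      have hz1 : RL z a1 := by
        rw [RL_iff_left]
        simpa [ha1, hc1] using hzc1
      have hz2 : RL z a2 := by
        rw [RL_iff_left]
        simpa [ha2, hc2] using hzc2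
      have hucons : ∀ (w : Fin n × Bool) (t : List (Fin n × Bool)), RL z w →
          (w :: t).Chain' RL → (u ++ w :: t).Chain' RL := by
        intro w t hzw hwt
        rw [List.chain'_append]
        refine ⟨hcu, hwt, ?_⟩
        intro x hx y hy
        rw [hzlast] at hx
        injection hx with hx
        subst hx
        simp only [List.head?_cons, Option.mem_def, Option.some.injEq] at hy
        subst hy
        exact hzw
      have hgetk : ∀ (w : Fin n × Bool) (t : List (Fin n × Bool)),
          (u ++ w :: t)[k]? = some w := by
        intro w t
        rw [List.getElem?_append (l₁ := u), if_neg (by omega), hulen]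
        simp
      refine ⟨hucons a1 tx hz1 hctx, hucons a2 ty hz2 hcty, ?_, ?_, ?_, ?_, ?_, ?_, ?_, ?_⟩
      · simp only [List.length_append, List.length_cons, hulen]; omega
      · simp only [List.length_append, List.length_cons, hulen]; omega
      · simp only [List.length_append, List.length_cons, hulen]; omega
      · exact hgetk a1 tx
      · rw [List.getElem?_append, if_pos (by omega)]
        have : u[k-1]? = u.getLast? := by
          rw [List.getLast?_eq_getElem?, hulen]
        rw [this, hzlast]
        intro hcon
        injection hcon with hcon
        exact hzc2 hcon
      · simp only [List.length_append, List.length_cons, hulen]; omega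
      · rw [List.take_left' hulen, List.take_left' hulen]
      · exact hgetk a2 ty
  rw [hsetF, Set.ncard_coe_finset, card_FSet hUlen, hU, card_USet hn, hX, hY,
    card_XSet hn, card_XSet hn]
  have hcB : B.card = 2 * n - 2 := by
    have hc12 : c1 ≠ c2 := by
      simp only [hc1, hc2, ne_eq, Prod.mk.injEq]
      tauto
    have hBeq : B = Finset.univ \ {c1, c2} := by
      ext b
      simp only [hB, Finset.mem_filter, Finset.mem_univ, true_and, Finset.mem_sdiff,
        Finset.mem_insert, Finset.mem_singleton, not_or]
    rw [hBeq, Finset.card_sdiff_of_subset (Finset.subset_univ _), Finset.card_univ, card_letters hn]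
    rw [Finset.card_insert_of_notMem (by simp [hc12]), Finset.card_singleton]

  rw [hcB]

end CC3

/-- Fix `n ≥ 2`, `k ≥ 1`, and `p ≥ 1`. The number of pairs `(x, y) ∈ G_p × G_p` such
that the reduced word of `x` has length at least `k+1` with `(k+1)`-st letter `a₁` and
`k`-th letter not equal to `a₂⁻¹` (nor to `a₁⁻¹`, which is automatic by reducedness),
and the reduced word of `y` has length at least `k+1` with first `k` letters equal to
the first `k` letters of the reduced word of `x` and `(k+1)`-st letter equal to `a₂`,
is exactly `((n−1)/(n(2n−1)))·𝒮(k+1,p)²/𝒲(k+1)`. -/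
theorem count_case_three (n k p : ℕ) (hn : 2 ≤ n) (hk : 1 ≤ k) (hp : 1 ≤ p)
    (P : Set (FreeGroup (Fin n) × FreeGroup (Fin n)))
    (hP : P = {xy | xy.1.toWord.length ≤ p ∧ xy.2.toWord.length ≤ p ∧
      k + 1 ≤ xy.1.toWord.length ∧
      xy.1.toWord[k]? = some (⟨0, by omega⟩, true) ∧
      xy.1.toWord[k - 1]? ≠ some (⟨1, by omega⟩, false) ∧
      k + 1 ≤ xy.2.toWord.length ∧
      xy.2.toWord.take k = xy.1.toWord.take k ∧
      xy.2.toWord[k]? = some (⟨1, by omega⟩, true)}) :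
    (P.ncard : ℝ) =
      ((n : ℝ) - 1) / ((n : ℝ) * (2 * (n : ℝ) - 1)) *
        (Scard n (k + 1) p : ℝ) ^ 2 / (Wcard n (k + 1) : ℝ) := by
  classical
  have hn1 : 1 ≤ n := by omega
  set i : Fin n := ⟨0, by omega⟩ with hi
  set j : Fin n := ⟨1, by omega⟩ with hj
  have hij : i ≠ j := by simp [hi, hj, Fin.ext_iff]
  -- Step 1: transfer the count to pairs of reduced words.
  have h2 : P.ncard = {ll : List (Fin n × Bool) × List (Fin n × Bool) |
      ll.1.Chain' CC3.RL ∧ ll.2.Chain' CC3.RL ∧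
      (ll.1.length ≤ p ∧ ll.2.length ≤ p ∧ k + 1 ≤ ll.1.length ∧
       ll.1[k]? = some (i, true) ∧ ll.1[k - 1]? ≠ some (j, false) ∧
       k + 1 ≤ ll.2.length ∧ ll.2.take k = ll.1.take k ∧
       ll.2[k]? = some (j, true))}.ncard := by
    subst hP
    exact CC3.ncard_toWord2 (fun lx ly => lx.length ≤ p ∧ ly.length ≤ p ∧
      k + 1 ≤ lx.length ∧ lx[k]? = some (i, true) ∧ lx[k - 1]? ≠ some (j, false) ∧
      k + 1 ≤ ly.length ∧ ly.take k = lx.take k ∧ ly[k]? = some (j, true))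
  rw [h2, CC3.ncard_P hn1 hk i j hij]
  -- Step 2: compute `Scard` and `Wcard`.
  rw [CC3.Scard_eq hn1 k p]
  have hW : Wcard n (k + 1) = 2 * n * (2 * n - 1) ^ k := by simp [Wcard]
  rw [hW]
  have e1 : ((2 * n - 1 : ℕ) : ℝ) = 2 * (n : ℝ) - 1 := by
    rw [Nat.cast_sub (by omega)]; push_cast; ring
  have e2 : ((2 * n - 2 : ℕ) : ℝ) = 2 * (n : ℝ) - 2 := by
    rw [Nat.cast_sub (by omega)]; push_cast; ring
  push_cast [e1, e2]
  have hkk : (2 * (n : ℝ) - 1) ^ k = (2 * (n : ℝ) - 1) ^ (k - 1) * (2 * (n : ℝ) - 1) := by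
    rw [← pow_succ]; congr 1; omega
  have hn0 : (n : ℝ) ≠ 0 := Nat.cast_ne_zero.mpr (by omega)
  have hnR : (1 : ℝ) ≤ (n : ℝ) := by exact_mod_cast hn1
  have hq0 : 2 * (n : ℝ) - 1 ≠ 0 := by nlinarith
  rw [hkk]
  field_simp
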